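/- Constant marginal-valuation ratio: for all q0, q1 ≥ 0, ∂V_L/∂n1 (q0,q1) = λ*(q0) · ∂V_S/∂n1 (q0,q1), where λ*(q0) = ( σ²·(q0+1) / ((q0+1) + σ²·(2·q0+1)) )²; in particular the ratio of the two types' marginal valuations of current data is independent of q1. -/

import Mathlib

/-- The denominator `D(n0,n1) = σ²(n0+n1+2 n0 n1) + (1+n0)(1+n1)`. -/
noncomputable def Dden (σ n0 n1 : ℝ) : ℝ :=
  σ^2 * (n0 + n1 + 2*n0*n1) + (1+n0)*(1+n1)

/-- Forecaster value `V_L`. -/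
noncomputable def VL (σ n0 n1 : ℝ) : ℝ :=
  σ^4 * (n0 + n1 + 2*n0*n1) / Dden σ n0 n1

/-- Nowcaster value `V_S`. -/
noncomputable def VS (σ n0 n1 : ℝ) : ℝ :=
  VL σ n0 n1 + (3*σ^2*n0*n1 + 2*σ^2*n1 + n1 + n0*n1) / Dden σ n0 n1

/-- The threshold `λ*(q0)`. -/
noncomputable def lamStar (σ q0 : ℝ) : ℝ :=
  (σ^2 * (q0+1) / ((q0+1) + σ^2 * (2*q0+1)))^2

/-- Constant marginal-valuation ratio:
`∂V_L/∂n1 (q0,q1) = λ*(q0) · ∂V_S/∂n1 (q0,q1)`, independent of `q1`. -/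
theorem stmt11 (σ : ℝ) (hσ : 0 < σ) (q0 q1 : ℝ) (h0 : 0 ≤ q0) (h1 : 0 ≤ q1) :
    deriv (fun y => VL σ q0 y) q1 = lamStar σ q0 * deriv (fun y => VS σ q0 y) q1 := by
  set A : ℝ := σ^2*(1+2*q0) + (1+q0) with hA
  set B : ℝ := σ^2*q0 + (1+q0) with hB
  have hApos : 0 < A := by positivity
  have hDpos : 0 < A*q1 + B := by positivity
  have hDne : A*q1 + B ≠ 0 := ne_of_gt hDpos
  have lin : ∀ a b : ℝ, HasDerivAt (fun y : ℝ => a*y + b) a q1 := fun a b => by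
    simpa using ((hasDerivAt_id q1).const_mul a).add_const b
  -- derivative of VL
  have eL : (fun y => VL σ q0 y)
      = fun y => (σ^4*(1+2*q0)*y + σ^4*q0) / (A*y + B) := by
    funext y; unfold VL Dden; rw [hA, hB]; congr 1 <;> ring
  have hVL : HasDerivAt (fun y => VL σ q0 y)
      ((σ^4*(1+2*q0)*(A*q1+B) - (σ^4*(1+2*q0)*q1 + σ^4*q0)*A) / (A*q1+B)^2) q1 := by
    rw [eL]
    exact (lin _ _).div (lin _ _) hDne
  -- derivative of the extra term in VS
  set c : ℝ := 3*σ^2*q0 + 2*σ^2 + 1 + q0 with hc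
  have eM : (fun y => (3*σ^2*q0*y + 2*σ^2*y + y + q0*y) / Dden σ q0 y)
      = fun y => (c*y + 0) / (A*y + B) := by
    funext y; unfold Dden; rw [hA, hB, hc]; congr 1 <;> ring
  have hVS : HasDerivAt (fun y => VS σ q0 y)
      ((σ^4*(1+2*q0)*(A*q1+B) - (σ^4*(1+2*q0)*q1 + σ^4*q0)*A) / (A*q1+B)^2
        + (c*(A*q1+B) - (c*q1+0)*A) / (A*q1+B)^2) q1 := by
    have h2 : HasDerivAt (fun y => (3*σ^2*q0*y + 2*σ^2*y + y + q0*y) / Dden σ q0 y)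
        ((c*(A*q1+B) - (c*q1+0)*A) / (A*q1+B)^2) q1 := by
      rw [eM]; exact (lin _ _).div (lin _ _) hDne
    have := hVL.add h2
    exact this
  rw [hVL.deriv, hVS.deriv, lamStar]
  have hA2 : (q0+1) + σ^2 * (2*q0+1) ≠ 0 := by positivity
  field_simp
  rw [hA, hB, hc]
  ring
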